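/- arXiv:2509.10792 — 3 statements merged into one kernel-verified Lean document; each statement's English description precedes it below -/
import Mathlib

section
/- Let d ≥ 0 and C > 0, and let f : ℝ → ℝ be a nonnegative nondecreasing function satisfying f(s) ≤ C(1 + s^(2d)) for all s ≥ 0. Then for every Ω > 1 and every δ > 0, the set of natural numbers m such that f(Ω^(m+1)) ≤ Ω^(2d+δ) · f(Ω^m) is infinite; equivalently, there exists a sequence of integers m_i → ∞ with f(Ω^(m_i+1)) ≤ Ω^(2d+δ) · f(Ω^(m_i)). -/
/-- For a nonnegative nondecreasing `f : ℝ → ℝ` with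
`f s ≤ C (1 + s ^ (2 d))` for all `s ≥ 0`, given `Ω > 1` and `δ > 0`, the set of
natural numbers `m` with `f (Ω ^ (m+1)) ≤ Ω ^ (2 d + δ) * f (Ω ^ m)` is infinite. -/
theorem stmt_0 (d C : ℝ) (hd : 0 ≤ d) (hC : 0 < C) (f : ℝ → ℝ)
    (hf_nonneg : ∀ s : ℝ, 0 ≤ f s) (hf_mono : Monotone f)
    (hf_growth : ∀ s : ℝ, 0 ≤ s → f s ≤ C * (1 + s ^ (2 * d)))
    (Ω δ : ℝ) (hΩ : 1 < Ω) (hδ : 0 < δ) :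
    {m : ℕ | f (Ω ^ (m + 1)) ≤ Ω ^ (2 * d + δ) * f (Ω ^ m)}.Infinite := by
  have hΩ0 : (0:ℝ) < Ω := lt_trans one_pos hΩ
  by_contra hfin
  rw [Set.not_infinite] at hfin
  obtain ⟨N, hN⟩ := hfin.bddAbove
  -- for all m > N, the inequality fails
  have hfail : ∀ m : ℕ, N < m → Ω ^ (2 * d + δ) * f (Ω ^ m) < f (Ω ^ (m + 1)) := by
    intro m hm
    by_contra hle
    push_neg at hle
    exact absurd (hN hle) (not_le.mpr hm)
  set m0 : ℕ := N + 2 with hm0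
  set A : ℝ := Ω ^ (2 * d + δ) with hA
  set B : ℝ := Ω ^ (2 * d) with hB
  set E : ℝ := Ω ^ δ with hE
  have hB1 : (1:ℝ) ≤ B := Real.one_le_rpow hΩ.le (by linarith)
  have hE1 : (1:ℝ) < E := Real.one_lt_rpow_iff_of_pos hΩ0 |>.mpr (Or.inl ⟨hΩ, hδ⟩)
  have hAE : A = B * E := by
    rw [hA, hB, hE, ← Real.rpow_add hΩ0]
  have hA1 : (1:ℝ) ≤ A := Real.one_le_rpow hΩ.le (by linarith)
  -- f (Ω ^ m0) > 0
  have ha : 0 < f (Ω ^ m0) := by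
    have h1 := hfail (N + 1) (Nat.lt_succ_self N)
    have h2 : 0 ≤ Ω ^ (2 * d + δ) * f (Ω ^ (N + 1)) :=
      mul_nonneg (Real.rpow_nonneg hΩ0.le _) (hf_nonneg _)
    calc (0:ℝ) ≤ _ := h2
      _ < f (Ω ^ (N + 1 + 1)) := h1
  set a : ℝ := f (Ω ^ m0) with haa
  -- induction: A^k * a ≤ f (Ω ^ (m0 + k))
  have hind : ∀ k : ℕ, A ^ k * a ≤ f (Ω ^ (m0 + k)) := by
    intro k
    induction k with
    | zero => simp; exact haa.le
    | succ k ih =>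
      have hstep := hfail (m0 + k) (by omega)
      calc A ^ (k + 1) * a = A * (A ^ k * a) := by ring
        _ ≤ A * f (Ω ^ (m0 + k)) := by
            apply mul_le_mul_of_nonneg_left ih (by linarith)
        _ ≤ f (Ω ^ (m0 + k + 1)) := hstep.le
        _ = f (Ω ^ (m0 + (k + 1))) := by ring_nf
  -- growth bound: f (Ω ^ m) ≤ 2 * C * B ^ m
  have hgrow : ∀ m : ℕ, f (Ω ^ m) ≤ 2 * C * B ^ m := by
    intro m
    have h1 := hf_growth (Ω ^ m) (pow_nonneg hΩ0.le m)
    have h2 : (Ω ^ m : ℝ) ^ (2 * d) = B ^ m := by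
      rw [hB, ← Real.rpow_natCast Ω m, ← Real.rpow_mul hΩ0.le,
        ← Real.rpow_natCast (Ω ^ (2*d)) m, ← Real.rpow_mul hΩ0.le]
      ring_nf
    have hBm : (1:ℝ) ≤ B ^ m := one_le_pow₀ hB1
    calc f (Ω ^ m) ≤ C * (1 + (Ω ^ m) ^ (2 * d)) := h1
      _ = C * (1 + B ^ m) := by rw [h2]
      _ ≤ C * (B ^ m + B ^ m) := by nlinarith
      _ = 2 * C * B ^ m := by ring
  -- choose k large: E ^ k * a > 2 * C * B ^ m0
  obtain ⟨k, hk⟩ := pow_unbounded_of_one_lt (2 * C * B ^ m0 / a) hE1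
  rw [div_lt_iff₀ ha] at hk
  have hBk : (0:ℝ) < B ^ k := pow_pos (by linarith) k
  have h1 : A ^ k * a ≤ 2 * C * B ^ (m0 + k) := (hind k).trans (hgrow (m0 + k))
  have h2 : A ^ k = B ^ k * E ^ k := by rw [hAE, mul_pow]
  have h3 : B ^ (m0 + k) = B ^ m0 * B ^ k := pow_add B m0 k
  rw [h2, h3] at h1
  nlinarith [mul_lt_mul_of_pos_left hk hBk]
end

section
/- Let d > 0, let α ∈ [1, 2], let q : ℕ → ℝ be strictly increasing with q_i ≥ 0 for all i, let c : ℕ → ℝ, and assume the series ∑_i c_i² · α^(2 q_i) converges. For 0 < s ≤ α define I(s) = ∑_i c_i² · s^(2 q_i). If I(α) ≤ 2^(2d), I(α/2) = 1, and I(α/4) ≤ 2^(−2d), then there is exactly one index i₀ with c_{i₀} ≠ 0, and this index satisfies q_{i₀} = d. In particular, if d is not in the range of q, no such coefficients c exist. -/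
/-- Rigidity step in the three-circle theorem. If
`I s = ∑' i, c i ^ 2 * s ^ (2 * q i)` satisfies `I α ≤ 2 ^ (2 d)`, `I (α/2) = 1`
and `I (α/4) ≤ 2 ^ (-(2 d))` for some `α ∈ [1, 2]` and `d > 0`, then exactly one
coefficient `c i₀` is nonzero and its exponent satisfies `q i₀ = d`. -/
theorem stmt_4 (d : ℝ) (hd : 0 < d) (α : ℝ) (hα1 : 1 ≤ α) (hα2 : α ≤ 2)
    (q : ℕ → ℝ) (hq : StrictMono q) (hq0 : ∀ i, 0 ≤ q i) (c : ℕ → ℝ)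
    (hsum : Summable fun i => c i ^ 2 * α ^ (2 * q i))
    (hIα : (∑' i, c i ^ 2 * α ^ (2 * q i)) ≤ 2 ^ (2 * d))
    (hI2 : (∑' i, c i ^ 2 * (α / 2) ^ (2 * q i)) = 1)
    (hI4 : (∑' i, c i ^ 2 * (α / 4) ^ (2 * q i)) ≤ 2 ^ (-(2 * d))) :
    ∃ i₀, c i₀ ≠ 0 ∧ q i₀ = d ∧ ∀ j, c j ≠ 0 → j = i₀ := by
  have hα0 : (0:ℝ) < α := lt_of_lt_of_le one_pos hα1
  have h2p : (0:ℝ) < α / 2 := by positivity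
  have h4p : (0:ℝ) < α / 4 := by positivity
  set a : ℕ → ℝ := fun i => c i ^ 2 * (α / 2) ^ (2 * q i) with ha
  have hxpos : ∀ i, (0:ℝ) < (2:ℝ) ^ (2 * q i) := fun i => Real.rpow_pos_of_pos two_pos _
  have hxone : ∀ i, (1:ℝ) ≤ (2:ℝ) ^ (2 * q i) := fun i =>
    Real.one_le_rpow one_le_two (by have := hq0 i; linarith)
  have ha_nonneg : ∀ i, 0 ≤ a i := fun i => by
    have : (0:ℝ) ≤ (α / 2) ^ (2 * q i) := Real.rpow_nonneg h2p.le _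
    positivity
  have key1 : ∀ i, c i ^ 2 * α ^ (2 * q i) = a i * 2 ^ (2 * q i) := by
    intro i
    have h : α ^ (2 * q i) = (α / 2) ^ (2 * q i) * 2 ^ (2 * q i) := by
      rw [← Real.mul_rpow h2p.le (by norm_num)]
      congr 1; ring
    rw [ha]; simp only []; rw [h]; ring
  have key2 : ∀ i, c i ^ 2 * (α / 4) ^ (2 * q i) = a i / 2 ^ (2 * q i) := by
    intro i
    have h : (α / 2) ^ (2 * q i) = (α / 4) ^ (2 * q i) * 2 ^ (2 * q i) := by
      rw [← Real.mul_rpow h4p.le (by norm_num)]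
      congr 1; ring
    rw [ha]; simp only []; rw [h]
    field_simp
  -- Summability of the three series
  have hS1 : Summable (fun i => a i * 2 ^ (2 * q i)) := hsum.congr key1
  have hS0 : Summable a := by
    refine Summable.of_nonneg_of_le ha_nonneg (fun i => ?_) hS1
    nlinarith [ha_nonneg i, hxone i]
  have hS2 : Summable (fun i => a i / 2 ^ (2 * q i)) := by
    refine Summable.of_nonneg_of_le (fun i => div_nonneg (ha_nonneg i) (hxpos i).le) (fun i => ?_) hS0
    rw [div_le_iff₀ (hxpos i)]
    nlinarith [ha_nonneg i, hxone i]
  have hT1 : (∑' i, a i * 2 ^ (2 * q i)) ≤ 2 ^ (2 * d) := by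
    rw [← tsum_congr key1]; exact hIα
  have hT0 : (∑' i, a i) = 1 := hI2
  have hT2 : (∑' i, a i / 2 ^ (2 * q i)) ≤ 2 ^ (-(2 * d)) := by
    rw [← tsum_congr key2]; exact hI4
  -- The defect function
  set g : ℕ → ℝ := fun i =>
    a i * 2 ^ (2 * q i) + (2 ^ (2 * d)) ^ 2 * (a i / 2 ^ (2 * q i)) - 2 * 2 ^ (2 * d) * a i
    with hg
  have hdpos : (0:ℝ) < (2:ℝ) ^ (2 * d) := Real.rpow_pos_of_pos two_pos _
  have hg_eq : ∀ i, g i = (a i / 2 ^ (2 * q i)) * (2 ^ (2 * q i) - 2 ^ (2 * d)) ^ 2 := by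
    intro i
    rw [hg]; simp only []
    field_simp
    ring
  have hg_nonneg : ∀ i, 0 ≤ g i := fun i => by
    rw [hg_eq i]
    have h1 : 0 ≤ a i / 2 ^ (2 * q i) := div_nonneg (ha_nonneg i) (hxpos i).le
    positivity
  have hgsum : Summable g :=
    (hS1.add (hS2.mul_left _)).sub (hS0.mul_left _)
  have hgtsum : (∑' i, g i) ≤ 0 := by
    have e1 : (∑' i, g i) = (∑' i, a i * 2 ^ (2 * q i))
        + (2 ^ (2 * d)) ^ 2 * (∑' i, a i / 2 ^ (2 * q i))
        - 2 * 2 ^ (2 * d) * (∑' i, a i) := by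
      rw [hg]
      rw [Summable.tsum_sub (hS1.add (hS2.mul_left _)) (hS0.mul_left _),
        Summable.tsum_add hS1 (hS2.mul_left _), tsum_mul_left, tsum_mul_left]
    have hinv : (2:ℝ) ^ (-(2 * d)) = (2 ^ (2 * d))⁻¹ := by
      rw [Real.rpow_neg (by norm_num)]
    have : (2 ^ (2 * d)) ^ 2 * (∑' i, a i / 2 ^ (2 * q i))
        ≤ (2 ^ (2 * d)) ^ 2 * (2 ^ (2 * d))⁻¹ := by
      rw [← hinv]
      exact mul_le_mul_of_nonneg_left hT2 (by positivity)
    rw [e1, hT0]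
    have h2 : ((2:ℝ) ^ (2 * d)) ^ 2 * ((2:ℝ) ^ (2 * d))⁻¹ = (2:ℝ) ^ (2 * d) := by
      field_simp
    nlinarith
  have hg_zero : ∀ i, g i = 0 := by
    intro i
    have hle : g i ≤ ∑' j, g j := Summable.le_tsum hgsum i (fun j _ => hg_nonneg j)
    linarith [hg_nonneg i]
  -- any nonzero coefficient has exponent d
  have hq_eq : ∀ i, c i ≠ 0 → q i = d := by
    intro i hci
    have hai : 0 < a i := by
      have : (0:ℝ) < (α / 2) ^ (2 * q i) := Real.rpow_pos_of_pos h2p _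
      have hc2 : 0 < c i ^ 2 := by positivity
      rw [ha]; positivity
    have h0 := hg_zero i
    rw [hg_eq i] at h0
    have hfac : (0:ℝ) < a i / 2 ^ (2 * q i) := div_pos hai (hxpos i)
    have hsq : ((2:ℝ) ^ (2 * q i) - 2 ^ (2 * d)) ^ 2 = 0 := by
      rcases mul_eq_zero.mp h0 with h | h
      · exact absurd h hfac.ne'
      · exact h
    have heq : (2:ℝ) ^ (2 * q i) = 2 ^ (2 * d) := by
      have := sq_eq_zero_iff.mp hsq
      linarith
    have : 2 * q i = 2 * d := by
      have hlt : ¬ (2 * q i < 2 * d) := fun h => by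
        have := (Real.rpow_lt_rpow_left_iff (by norm_num : (1:ℝ) < 2)).mpr h
        linarith [heq]
      have hgt : ¬ (2 * d < 2 * q i) := fun h => by
        have := (Real.rpow_lt_rpow_left_iff (by norm_num : (1:ℝ) < 2)).mpr h
        linarith [heq]
      linarith [lt_trichotomy (2 * q i) (2 * d), not_lt.mp hlt, not_lt.mp hgt]
    linarith
  -- existence of a nonzero coefficient
  have hex : ∃ i, c i ≠ 0 := by
    by_contra h
    push_neg at h
    have : (∑' i, a i) = 0 := by
      have : ∀ i, a i = 0 := fun i => by rw [ha]; simp [h i]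
      simp [tsum_congr this]
    rw [hT0] at this
    norm_num at this
  obtain ⟨i₀, hi₀⟩ := hex
  exact ⟨i₀, hi₀, hq_eq i₀ hi₀, fun j hj =>
    hq.injective ((hq_eq j hj).trans (hq_eq i₀ hi₀).symm)⟩
end

section
/- For every d ≥ 0, δ > 0 and s₁ ≥ 1 there exists Ω₀ = Ω₀(d, δ, s₁) ≥ e such that the following holds for every Ω ≥ Ω₀. Let f : ℝ → ℝ be nonnegative and nondecreasing on [1, Ω] with f(1) = 1 and f(Ω) ≤ Ω^(2d), and suppose that for every s with s₁ ≤ s ≤ Ω/2 the implication holds: if f(s) > 2^(2d+δ) · f(s/2) then f(2s) > 2^(2d+δ) · f(s). Then f(s) ≤ 2^(2d+δ) · f(s/2) for every s with s₁ ≤ s ≤ log Ω. -/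
open Filter Real


/-- Real-analytic content of Corollary 4.4. For every `d ≥ 0`,
`δ > 0` and `s₁ ≥ 1` there is `Ω₀ ≥ e` such that for every `Ω ≥ Ω₀` and every
`f` nonnegative and nondecreasing on `[1, Ω]` with `f 1 = 1`, `f Ω ≤ Ω ^ (2 d)`,
and such that failure of doubling at a scale `s ∈ [s₁, Ω/2]` propagates to scale
`2 s`, the doubling bound `f s ≤ 2 ^ (2 d + δ) * f (s / 2)` holds for all
`s ∈ [s₁, log Ω]`. -/
theorem stmt_6 (d δ s₁ : ℝ) (hd : 0 ≤ d) (hδ : 0 < δ) (hs₁ : 1 ≤ s₁) :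
    ∃ Ω₀ : ℝ, Real.exp 1 ≤ Ω₀ ∧ ∀ Ω : ℝ, Ω₀ ≤ Ω →
      ∀ f : ℝ → ℝ,
        (∀ s : ℝ, 1 ≤ s → s ≤ Ω → 0 ≤ f s) →
        (∀ s t : ℝ, 1 ≤ s → s ≤ t → t ≤ Ω → f s ≤ f t) →
        f 1 = 1 →
        f Ω ≤ Ω ^ (2 * d) →
        (∀ s : ℝ, s₁ ≤ s → s ≤ Ω / 2 →
          2 ^ (2 * d + δ) * f (s / 2) < f s → 2 ^ (2 * d + δ) * f s < f (2 * s)) →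
        ∀ s : ℝ, s₁ ≤ s → s ≤ Real.log Ω → f s ≤ 2 ^ (2 * d + δ) * f (s / 2) := by
  have h2pos : (0:ℝ) < 2 ^ (2*d+δ) := Real.rpow_pos_of_pos two_pos _
  have hexp : (2:ℝ) * d + δ > 0 := by linarith
  -- eventual analytic conditions
  have hE : ∀ᶠ x : ℝ in atTop,
      (2 * Real.log x) ^ (2*d+δ) ≤ x ^ δ ∧ Real.log x ≤ x / 2 := by
    have h1 := (isLittleO_log_rpow_rpow_atTop (2*d+δ) hδ).def
      (c := (2:ℝ) ^ (-(2*d+δ))) (Real.rpow_pos_of_pos two_pos _)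
    have h2 := Real.isLittleO_log_id_atTop.def (c := (1:ℝ)/2) (by norm_num)
    filter_upwards [h1, h2, eventually_ge_atTop (Real.exp 1)] with x hx1 hx2 hxe
    have hx0 : (0:ℝ) < x := lt_of_lt_of_le (Real.exp_pos 1) hxe
    have hlx : (1:ℝ) ≤ Real.log x := (Real.le_log_iff_exp_le hx0).2 hxe
    constructor
    · have hlxn : 0 ≤ Real.log x := by linarith
      have e1 : (2 * Real.log x) ^ (2*d+δ)
          = 2 ^ (2*d+δ) * (Real.log x) ^ (2*d+δ) :=
        Real.mul_rpow (by norm_num) hlxn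
      have e2 : (Real.log x) ^ (2*d+δ) ≤ 2 ^ (-(2*d+δ)) * x ^ δ := by
        have := hx1
        rw [Real.norm_eq_abs, Real.norm_eq_abs,
          abs_of_nonneg (Real.rpow_nonneg hlxn _),
          abs_of_nonneg (Real.rpow_nonneg hx0.le _)] at this
        exact this
      calc (2 * Real.log x) ^ (2*d+δ)
          ≤ 2 ^ (2*d+δ) * (2 ^ (-(2*d+δ)) * x ^ δ) := by
            rw [e1]; exact mul_le_mul_of_nonneg_left e2 h2pos.le
        _ = (2 ^ (2*d+δ) * 2 ^ (-(2*d+δ))) * x ^ δ := by ring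
        _ = x ^ δ := by
            rw [← Real.rpow_add two_pos, add_neg_cancel, Real.rpow_zero, one_mul]
    · have := hx2
      rw [Real.norm_eq_abs, Real.norm_eq_abs, id, abs_of_nonneg hx0.le] at this
      calc Real.log x ≤ |Real.log x| := le_abs_self _
        _ ≤ 1/2 * x := this
        _ = x / 2 := by ring
  obtain ⟨a, ha⟩ := eventually_atTop.1 hE
  refine ⟨max a (Real.exp 1), le_max_right _ _, ?_⟩
  intro Ω hΩ₀ f hf0 hmono hf1 hfΩ himp s hss₁ hslog
  have hΩe : Real.exp 1 ≤ Ω := le_trans (le_max_right _ _) hΩ₀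
  have hΩpos : (0:ℝ) < Ω := lt_of_lt_of_le (Real.exp_pos 1) hΩe
  obtain ⟨hcond, hlogΩ⟩ := ha Ω (le_trans (le_max_left _ _) hΩ₀)
  have hlog1 : (1:ℝ) ≤ Real.log Ω := (Real.le_log_iff_exp_le hΩpos).2 hΩe
  have hs1 : (1:ℝ) ≤ s := hs₁.trans hss₁
  have hspos : (0:ℝ) < s := lt_of_lt_of_le one_pos hs1
  have hsΩ2 : s ≤ Ω / 2 := hslog.trans hlogΩ
  have hsΩ : s ≤ Ω := by linarith
  by_contra hcon
  push_neg at hcon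
  -- induction claim
  have key : ∀ k : ℕ, (2:ℝ)^(k+1) * s ≤ Ω →
      2 ^ (2*d+δ) * f ((2:ℝ)^k * s) < f ((2:ℝ)^(k+1) * s) ∧
      (2 ^ (2*d+δ))^(k+1) * f s < f ((2:ℝ)^(k+1) * s) := by
    intro k
    induction k with
    | zero =>
      intro hk
      have hs2 : s ≤ Ω / 2 := by
        have : (2:ℝ)^(0+1) * s = 2 * s := by norm_num
        rw [this] at hk; linarith
      have h0 := himp s hss₁ hs2 hcon
      constructor
      · simpa using h0
      · simpa using h0
    | succ k ih =>
      intro hk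
      have hpk : (0:ℝ) < (2:ℝ)^(k+1) := by positivity
      have hle : (2:ℝ)^(k+1) * s ≤ Ω := by
        have : (2:ℝ)^(k+1) * s ≤ (2:ℝ)^(k+1+1) * s := by
          have : (2:ℝ)^(k+1) ≤ (2:ℝ)^(k+1+1) := by
            apply pow_le_pow_right₀ (by norm_num); omega
          nlinarith
        linarith
      obtain ⟨ih1, ih2⟩ := ih hle
      set t : ℝ := (2:ℝ)^(k+1) * s with ht
      have hts₁ : s₁ ≤ t := by
        have h1t : (1:ℝ) ≤ (2:ℝ)^(k+1) := one_le_pow₀ (by norm_num)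
        nlinarith
      have htΩ2 : t ≤ Ω / 2 := by
        have : (2:ℝ)^(k+1+1) * s = 2 * t := by rw [ht]; ring
        rw [this] at hk; linarith
      have htdiv : t / 2 = (2:ℝ)^k * s := by rw [ht]; ring
      have hfail : 2 ^ (2*d+δ) * f (t / 2) < f t := by rw [htdiv]; exact ih1
      have hstep := himp t hts₁ htΩ2 hfail
      have h2t : 2 * t = (2:ℝ)^(k+1+1) * s := by rw [ht]; ring
      rw [h2t] at hstep
      refine ⟨hstep, ?_⟩
      calc (2 ^ (2*d+δ))^(k+1+1) * f s
          = 2 ^ (2*d+δ) * ((2 ^ (2*d+δ))^(k+1) * f s) := by ring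
        _ < 2 ^ (2*d+δ) * f t := by
            exact mul_lt_mul_of_pos_left ih2 h2pos
        _ < f ((2:ℝ)^(k+1+1) * s) := hstep
  -- find minimal N with Ω < 2^N * s
  have hex : ∃ n : ℕ, Ω < (2:ℝ)^n * s := by
    obtain ⟨n, hn⟩ := pow_unbounded_of_one_lt Ω (by norm_num : (1:ℝ) < 2)
    exact ⟨n, by nlinarith [one_le_pow₀ (by norm_num : (1:ℝ) ≤ 2) (n := n)]⟩
  classical
  set N := Nat.find hex with hN
  have hNspec : Ω < (2:ℝ)^N * s := Nat.find_spec hex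
  have hN2 : 2 ≤ N := by
    by_contra hlt
    push_neg at hlt
    interval_cases N
    · simp at hNspec; linarith
    · have : (2:ℝ)^1 * s = 2 * s := by norm_num
      rw [this] at hNspec; linarith
  obtain ⟨m, hm⟩ : ∃ m, N = m + 2 := ⟨N - 2, by omega⟩
  have hmin : ¬ (Ω < (2:ℝ)^(m+1) * s) := Nat.find_min hex (by omega)
  push_neg at hmin
  obtain ⟨_, hkey⟩ := key m hmin
  -- lower bound 2^(m+1) ≥ Ω / (2 log Ω)
  have hlb : Ω / (2 * Real.log Ω) ≤ (2:ℝ)^(m+1) := by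
    rw [div_le_iff₀ (by linarith : (0:ℝ) < 2 * Real.log Ω)]
    have : (2:ℝ)^(m+2) * s = 2 * ((2:ℝ)^(m+1) * s) := by ring
    have hΩlt : Ω < 2 * ((2:ℝ)^(m+1) * s) := by
      rw [← this, ← hm]; exact hNspec
    have hpm : (0:ℝ) < (2:ℝ)^(m+1) := by positivity
    nlinarith
  -- chain of inequalities giving contradiction
  have hfs1 : (1:ℝ) ≤ f s := hf1 ▸ hmono 1 s le_rfl hs1 hsΩ
  have hA : Ω ^ (2*d) ≤ (Ω / (2 * Real.log Ω)) ^ (2*d+δ) := by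
    have hlpos : (0:ℝ) < 2 * Real.log Ω := by linarith
    rw [Real.div_rpow hΩpos.le hlpos.le, le_div_iff₀ (Real.rpow_pos_of_pos hlpos _),
      Real.rpow_add hΩpos]
    exact mul_le_mul_of_nonneg_left hcond (Real.rpow_nonneg hΩpos.le _)
  have hB : (Ω / (2 * Real.log Ω)) ^ (2*d+δ) ≤ ((2:ℝ)^(m+1)) ^ (2*d+δ) :=
    Real.rpow_le_rpow (by positivity) hlb (by linarith)
  have hC : ((2:ℝ)^(m+1)) ^ (2*d+δ) = (2 ^ (2*d+δ))^(m+1) := by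
    rw [← Real.rpow_natCast (2:ℝ) (m+1), ← Real.rpow_natCast ((2:ℝ) ^ (2*d+δ)) (m+1),
      ← Real.rpow_mul (by norm_num), ← Real.rpow_mul (by norm_num), mul_comm]
  have hD : ((2:ℝ) ^ (2*d+δ))^(m+1) ≤ (2 ^ (2*d+δ))^(m+1) * f s :=
    le_mul_of_one_le_right (by positivity) hfs1
  have hF : f ((2:ℝ)^(m+1) * s) ≤ f Ω := by
    apply hmono _ _ _ hmin le_rfl
    have h1t : (1:ℝ) ≤ (2:ℝ)^(m+1) := one_le_pow₀ (by norm_num)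
    nlinarith
  have : Ω ^ (2*d) < Ω ^ (2*d) :=
    lt_of_le_of_lt (hA.trans (hB.trans (hC.le.trans hD)))
      (lt_of_lt_of_le hkey (hF.trans hfΩ))
  exact lt_irrefl _ this
end
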